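/- Let r ≥ 0 and m ≥ 3r + 1 be integers and set z = x + y + 1 ∈ ℝ[x,y]. Then every polynomial f ∈ ℝ[x,y] of total degree at most m can be written f = a·x^{r+1} + b·y^{r+1} + c·z^{r+1} with a, b, c ∈ ℝ[x,y] of total degree at most m − r − 1; that is, P_m = x^{r+1}·P_{m−r−1} + y^{r+1}·P_{m−r−1} + z^{r+1}·P_{m−r−1}. -/
import Mathlib


open MvPolynomial

noncomputable section

/-- Bivariate real polynomials. -/
abbrev Pol := MvPolynomial (Fin 2) ℝ

/-- The target submodule. -/
def Tsub (r m : ℕ) : Submodule ℝ Pol :=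
  (restrictTotalDegree (Fin 2) ℝ (m - (r + 1))).map
      (LinearMap.mulRight ℝ ((X 0 : Pol) ^ (r + 1))) ⊔
  (restrictTotalDegree (Fin 2) ℝ (m - (r + 1))).map
      (LinearMap.mulRight ℝ ((X 1 : Pol) ^ (r + 1))) ⊔
  (restrictTotalDegree (Fin 2) ℝ (m - (r + 1))).map
      (LinearMap.mulRight ℝ (((X 0 + X 1 + 1) : Pol) ^ (r + 1)))

lemma zdeg : ((X 0 + X 1 + 1 : Pol)).totalDegree ≤ 1 := by
  refine (totalDegree_add _ _).trans ?_
  simp [totalDegree_X, totalDegree_one]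
  exact (totalDegree_add _ _).trans (by simp [totalDegree_X])

lemma deg_xyz (a b c : ℕ) :
    ((X 0 : Pol) ^ a * X 1 ^ b * (X 0 + X 1 + 1) ^ c).totalDegree ≤ a + b + c := by
  refine (totalDegree_mul _ _).trans ?_
  have h1 : ((X 0 : Pol) ^ a * X 1 ^ b).totalDegree ≤ a + b := by
    refine (totalDegree_mul _ _).trans ?_
    have := totalDegree_pow (X 0 : Pol) a
    have := totalDegree_pow (X 1 : Pol) b
    simp only [totalDegree_X] at *
    omega
  have h2 : ((X 0 + X 1 + 1 : Pol) ^ c).totalDegree ≤ c := by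
    refine (totalDegree_pow _ _).trans ?_
    have := zdeg
    nlinarith
  omega

lemma mem_T (r m : ℕ) (α β γ : ℕ) (hsum : α + β + γ ≤ m)
    (hc : r + 1 ≤ α ∨ r + 1 ≤ β ∨ r + 1 ≤ γ) :
    (X 0 : Pol) ^ α * X 1 ^ β * (X 0 + X 1 + 1) ^ γ ∈ Tsub r m := by
  rcases hc with hc | hc | hc
  · apply Submodule.mem_sup_left; apply Submodule.mem_sup_left
    refine ⟨(X 0 : Pol) ^ (α - (r + 1)) * X 1 ^ β * (X 0 + X 1 + 1) ^ γ, ?_, ?_⟩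
    · simp only [SetLike.mem_coe, mem_restrictTotalDegree]
      exact (deg_xyz _ _ _).trans (by omega)
    · simp only [LinearMap.mulRight_apply]
      rw [← pow_mul_pow_sub (X 0 : Pol) hc]; ring
  · apply Submodule.mem_sup_left; apply Submodule.mem_sup_right
    refine ⟨(X 0 : Pol) ^ α * X 1 ^ (β - (r + 1)) * (X 0 + X 1 + 1) ^ γ, ?_, ?_⟩
    · simp only [SetLike.mem_coe, mem_restrictTotalDegree]
      exact (deg_xyz _ _ _).trans (by omega)
    · simp only [LinearMap.mulRight_apply]
      rw [← pow_mul_pow_sub (X 1 : Pol) hc]; ring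
  · apply Submodule.mem_sup_right
    refine ⟨(X 0 : Pol) ^ α * X 1 ^ β * (X 0 + X 1 + 1) ^ (γ - (r + 1)), ?_, ?_⟩
    · simp only [SetLike.mem_coe, mem_restrictTotalDegree]
      exact (deg_xyz _ _ _).trans (by omega)
    · simp only [LinearMap.mulRight_apply]
      rw [← pow_mul_pow_sub (X 0 + X 1 + 1 : Pol) hc]; ring

lemma aux (r m : ℕ) (hm : 3 * r + 1 ≤ m) :
    ∀ N i j γ, 3 * r + 1 ≤ i + j + γ + N → i + j + γ ≤ m →
      (X 0 : Pol) ^ i * X 1 ^ j * (X 0 + X 1 + 1) ^ γ ∈ Tsub r m := by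
  intro N
  induction N with
  | zero =>
      intro i j γ h1 h2
      exact mem_T r m i j γ h2 (by omega)
  | succ N ih =>
      intro i j γ h1 h2
      by_cases hbig : 3 * r + 1 ≤ i + j + γ
      · exact mem_T r m i j γ h2 (by omega)
      · push_neg at hbig
        have key : (X 0 : Pol) ^ i * X 1 ^ j * (X 0 + X 1 + 1) ^ γ =
            (X 0 : Pol) ^ i * X 1 ^ j * (X 0 + X 1 + 1) ^ (γ + 1)
            - (X 0 : Pol) ^ (i + 1) * X 1 ^ j * (X 0 + X 1 + 1) ^ γ
            - (X 0 : Pol) ^ i * X 1 ^ (j + 1) * (X 0 + X 1 + 1) ^ γ := by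
          ring
        rw [key]
        apply Submodule.sub_mem
        apply Submodule.sub_mem
        · exact ih i j (γ + 1) (by omega) (by omega)
        · exact ih (i + 1) j γ (by omega) (by omega)
        · exact ih i (j + 1) γ (by omega) (by omega)

lemma mono_mem (r m : ℕ) (hm : 3 * r + 1 ≤ m) (d : Fin 2 →₀ ℕ) (t : ℝ)
    (hd : d 0 + d 1 ≤ m) : (monomial d t : Pol) ∈ Tsub r m := by
  have hmono : (monomial d t : Pol) = t • ((X 0 : Pol) ^ d 0 * X 1 ^ d 1 *
      (X 0 + X 1 + 1) ^ 0) := by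
    rw [pow_zero, mul_one]
    rw [show (monomial d t : Pol) = C t * (X 0 : Pol) ^ d 0 * X 1 ^ d 1 from ?_]
    · rw [smul_eq_C_mul]; ring
    · rw [monomial_eq]
      rw [Finsupp.prod_fintype _ _ (fun i => pow_zero _)]
      rw [Fin.prod_univ_two]
      ring
  rw [hmono]
  exact Submodule.smul_mem _ _ (aux r m hm (3 * r + 1) (d 0) (d 1) 0 (by omega) (by omega))

/-- For `m ≥ 3r + 1` and `z = x + y + 1`, every polynomial of
total degree at most `m` can be written `a·x^{r+1} + b·y^{r+1} + c·z^{r+1}`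
with `a, b, c` of total degree at most `m − r − 1`. -/
theorem stmt8 (r m : ℕ) (hm : 3 * r + 1 ≤ m)
    (f : Pol) (hf : f.totalDegree ≤ m) :
    ∃ a b c : Pol,
      a.totalDegree ≤ m - (r + 1) ∧
      b.totalDegree ≤ m - (r + 1) ∧
      c.totalDegree ≤ m - (r + 1) ∧
      f = a * X 0 ^ (r + 1) + b * X 1 ^ (r + 1) + c * (X 0 + X 1 + 1) ^ (r + 1) := by
  have hfT : f ∈ Tsub r m := by
    rw [as_sum f]
    apply Submodule.sum_mem
    intro d hd
    apply mono_mem r m hm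
    have := le_totalDegree (R := ℝ) hd
    have hsum : (d.sum fun _ e => e) = d 0 + d 1 := by
      rw [Finsupp.sum_fintype _ _ (fun i => rfl), Fin.sum_univ_two]
    omega
  rw [Tsub] at hfT
  rcases Submodule.mem_sup.mp hfT with ⟨g, hg, cz, hcz, hgc⟩
  rcases Submodule.mem_sup.mp hg with ⟨ax, hax, by', hby, hab⟩
  rcases hax with ⟨a, ha, rfl⟩
  rcases hby with ⟨b, hb, rfl⟩
  rcases hcz with ⟨c, hc, rfl⟩
  simp only [SetLike.mem_coe, mem_restrictTotalDegree] at ha hb hc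
  refine ⟨a, b, c, ha, hb, hc, ?_⟩
  simp only [LinearMap.mulRight_apply] at hab hgc
  rw [← hgc, ← hab]

end
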